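/- Joint convexity of quantum relative entropy (T-product version): the function D(A‖B) = tr(A(log A - log B)) is jointly convex on pairs of positive definite Hermitian matrices: for t ∈ [0,1], D(tA₁+(1-t)A₂ ‖ tB₁+(1-t)B₂) ≤ t·D(A₁‖B₁) + (1-t)·D(A₂‖B₂). -/

import Mathlib

open Matrix
open scoped ComplexOrder

open MeasureTheory Filter

namespace RelEntAux

variable {m : ℕ}


noncomputable def h (a b s : ℝ) : ℝ := a * (a - b) / ((1 + s) * (a + s * b))

lemma h_eq {a b : ℝ} (ha : 0 < a) (hb : 0 < b) {s : ℝ} (hs : 0 < s) :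
    h a b s = a * (1/(1+s) - 1/s) + (a^2/(a+s*b))/s := by
  have h1 : (0:ℝ) < 1 + s := by linarith
  have h2 : (0:ℝ) < a + s * b := by positivity
  unfold h
  field_simp
  ring

lemma h_hasDeriv {a b : ℝ} (ha : 0 < a) (hb : 0 < b) {s : ℝ} (hs : 0 ≤ s) :
    HasDerivAt (fun u => a * Real.log (1 + u) - a * Real.log (a + u * b)) (h a b s) s := by
  have h1 : (0:ℝ) < 1 + s := by linarith
  have h2 : (0:ℝ) < a + s * b := by nlinarith
  have d1 : HasDerivAt (fun u : ℝ => 1 + u) 1 s := (hasDerivAt_id s).const_add 1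
  have d1' : HasDerivAt (fun u : ℝ => Real.log (1+u)) (1/(1+s)) s := by
    simpa using d1.log h1.ne'
  have d2 : HasDerivAt (fun u : ℝ => a + u * b) b s := by
    simpa using ((hasDerivAt_id s).mul_const b).const_add a
  have d2' : HasDerivAt (fun u : ℝ => Real.log (a+u*b)) (b/(a+s*b)) s := d2.log h2.ne'
  have := (d1'.const_mul a).sub (d2'.const_mul a)
  refine this.congr_deriv ?_
  unfold h
  field_simp
  ring

lemma g_tendsto {a b : ℝ} (ha : 0 < a) (hb : 0 < b) :
    Tendsto (fun s => a * Real.log (1 + s) - a * Real.log (a + s * b)) atTop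
      (nhds (-(a * Real.log b))) := by
  have l1 : Tendsto (fun s : ℝ => s⁻¹+1) atTop (nhds 1) := by
    simpa using (tendsto_inv_atTop_zero (𝕜 := ℝ)).add_const 1
  have l2 : Tendsto (fun s : ℝ => a * s⁻¹+b) atTop (nhds b) := by
    simpa using ((tendsto_inv_atTop_zero (𝕜 := ℝ)).const_mul a).add_const b
  have key : Tendsto (fun s : ℝ => (1+s)/(a+s*b)) atTop (nhds (1/b)) := by
    have h0 := l1.div l2 hb.ne'
    refine Tendsto.congr' ?_ (by simpa using h0)
    filter_upwards [eventually_gt_atTop (0:ℝ)] with s hs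
    have d2 : a + s * b ≠ 0 := by positivity
    have hs' : s ≠ 0 := hs.ne'
    simp only [Pi.div_apply]
    rw [div_eq_div_iff (by positivity) d2]
    field_simp
  have lcont : Tendsto (fun s : ℝ => a * Real.log ((1+s)/(a+s*b))) atTop
      (nhds (a * Real.log (1/b))) :=
    ((Real.continuousAt_log (by positivity)).tendsto.comp key).const_mul a
  have he : a * Real.log (1/b) = -(a * Real.log b) := by
    rw [one_div, Real.log_inv]; ring
  rw [he] at lcont
  refine Tendsto.congr' ?_ lcont
  filter_upwards [eventually_gt_atTop (0:ℝ)] with s hs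
  rw [Real.log_div (by linarith) (by positivity), mul_sub]

lemma h_nonneg_of {a b : ℝ} (ha : 0 < a) (hb : 0 < b) (hba : b ≤ a) :
    ∀ x ∈ Set.Ioi (0:ℝ), 0 ≤ h a b x := fun x hx => by
  have hx' : (0:ℝ) < x := hx
  have hd : (0:ℝ) < (1 + x) * (a + x * b) := by positivity
  exact div_nonneg (mul_nonneg ha.le (by linarith)) hd.le

lemma h_nonpos_of {a b : ℝ} (ha : 0 < a) (hb : 0 < b) (hab : a ≤ b) :
    ∀ x ∈ Set.Ioi (0:ℝ), h a b x ≤ 0 := fun x hx => by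
  have hx' : (0:ℝ) < x := hx
  have hd : (0:ℝ) < (1 + x) * (a + x * b) := by positivity
  exact div_nonpos_of_nonpos_of_nonneg (mul_nonpos_of_nonneg_of_nonpos ha.le (by linarith)) hd.le

lemma h_integrableOn {a b : ℝ} (ha : 0 < a) (hb : 0 < b) :
    IntegrableOn (h a b) (Set.Ioi 0) := by
  rcases le_total b a with hba | hab
  · exact integrableOn_Ioi_deriv_of_nonneg' (fun x hx => h_hasDeriv ha hb hx)
      (h_nonneg_of ha hb hba) (g_tendsto ha hb)
  · exact integrableOn_Ioi_deriv_of_nonpos' (fun x hx => h_hasDeriv ha hb hx)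
      (h_nonpos_of ha hb hab) (g_tendsto ha hb)

lemma h_integral {a b : ℝ} (ha : 0 < a) (hb : 0 < b) :
    ∫ s in Set.Ioi 0, h a b s = a * Real.log a - a * Real.log b := by
  have hval : -(a * Real.log b) - (a * Real.log (1+0) - a * Real.log (a + 0 * b))
      = a * Real.log a - a * Real.log b := by
    simp [Real.log_one]; ring
  rcases le_total b a with hba | hab
  · rw [integral_Ioi_of_hasDerivAt_of_nonneg' (fun x hx => h_hasDeriv ha hb hx)
      (h_nonneg_of ha hb hba) (g_tendsto ha hb)]
    exact hval
  · rw [integral_Ioi_of_hasDerivAt_of_nonpos' (fun x hx => h_hasDeriv ha hb hx)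
      (h_nonpos_of ha hb hab) (g_tendsto ha hb)]
    exact hval





lemma trace_re_nonneg {M : Matrix (Fin m) (Fin m) ℂ} (hM : M.PosSemidef) :
    0 ≤ (M.trace).re := by
  have h : ∀ i, 0 ≤ (M i i).re := fun i => by
    have h0 := hM.re_dotProduct_nonneg (Pi.single i 1)
    simpa [Matrix.mulVec_single, dotProduct, Pi.single_apply, apply_ite,
      Finset.sum_ite_eq'] using h0
  simp only [Matrix.trace, Matrix.diag, Complex.re_sum]
  exact Finset.sum_nonneg fun i _ => h i

lemma trace_diag_mul_mul_star (x : Fin m → ℂ) (D C : Matrix (Fin m) (Fin m) ℂ) :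
    (diagonal x * D * star C).trace = ∑ i, ∑ j, x i * D i j * star (C i j) := by
  simp only [Matrix.trace, Matrix.diag, star_eq_conjTranspose, Matrix.mul_apply,
    Matrix.conjTranspose_apply, Matrix.diagonal_apply, ite_mul, zero_mul,
    Finset.sum_ite_eq, Finset.mem_univ, if_true]

lemma sum_normSq_row {C : Matrix (Fin m) (Fin m) ℂ} (hC : C * star C = 1) (i : Fin m) :
    ∑ j, Complex.normSq (C i j) = 1 := by
  have h0 : (C * star C) i i = 1 := by rw [hC]; simp [Matrix.one_apply]
  rw [Matrix.mul_apply] at h0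
  have h1 : ∀ j, C i j * (star C) j i = ((Complex.normSq (C i j) : ℝ) : ℂ) := fun j => by
    rw [star_eq_conjTranspose, Matrix.conjTranspose_apply, Complex.star_def, Complex.mul_conj]
  rw [Finset.sum_congr rfl fun j _ => h1 j, ← Complex.ofReal_sum] at h0
  exact_mod_cast h0

lemma re_trace_conj_left {A Y Z : Matrix (Fin m) (Fin m) ℂ} (hA : A.IsHermitian) :
    ((Yᴴ * A * Z).trace).re = ((Zᴴ * A * Y).trace).re := by
  have key : Zᴴ * A * Y = (Yᴴ * A * Z)ᴴ := by
    simp [conjTranspose_mul, mul_assoc, hA.eq]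
  rw [key, trace_conjTranspose]
  simp

lemma re_trace_conj_right {Y Z B : Matrix (Fin m) (Fin m) ℂ} (hB : B.IsHermitian) :
    ((Yᴴ * Z * B).trace).re = ((Zᴴ * Y * B).trace).re := by
  have key : (Yᴴ * Z * B)ᴴ = B * (Zᴴ * Y) := by
    simp [conjTranspose_mul, mul_assoc, hB.eq]
  have : ((Yᴴ * Z * B).trace).re = ((B * (Zᴴ * Y)).trace).re := by
    rw [← key, trace_conjTranspose]; simp
  rw [this, trace_mul_comm]

lemma re_trace_swap {A Y : Matrix (Fin m) (Fin m) ℂ} (hA : A.IsHermitian) :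
    ((Yᴴ * A).trace).re = ((A * Y).trace).re := by
  have key : (Yᴴ * A)ᴴ = A * Y := by simp [conjTranspose_mul, hA.eq]
  rw [← key, trace_conjTranspose]; simp

lemma sylvester_re {A B Y : Matrix (Fin m) (Fin m) ℂ} {s : ℝ}
    (hY : A * Y + s • (Y * B) = A) (Z : Matrix (Fin m) (Fin m) ℂ) :
    ((Zᴴ * A * Y).trace).re + s * ((Zᴴ * Y * B).trace).re = ((Zᴴ * A).trace).re := by
  have h := congrArg (fun M => (Zᴴ * M).trace) hY
  simp only [mul_add, Matrix.mul_smul, trace_add, trace_smul] at h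
  have h' : (Zᴴ * (A * Y)).trace + (s:ℂ) * (Zᴴ * (Y * B)).trace = (Zᴴ * A).trace := by
    rw [← Complex.real_smul]; exact h
  have := congrArg Complex.re h'
  simpa [mul_assoc, Complex.add_re, Complex.re_ofReal_mul] using this

lemma q_le {A B Y : Matrix (Fin m) (Fin m) ℂ} (hA : A.PosSemidef) (hB : B.PosSemidef)
    {s : ℝ} (hs : 0 ≤ s) (hY : A * Y + s • (Y * B) = A) (Z : Matrix (Fin m) (Fin m) ℂ) :
    2 * ((Zᴴ * A).trace).re - ((Zᴴ * A * Z).trace).re - s * ((Zᴴ * Z * B).trace).re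
      ≤ ((A * Y).trace).re := by
  have h1 : 0 ≤ (((Z - Y)ᴴ * A * (Z - Y)).trace).re :=
    trace_re_nonneg (hA.conjTranspose_mul_mul_same (Z - Y))
  have h2 : 0 ≤ (((Z - Y)ᴴ * (Z - Y) * B).trace).re := by
    have e : ((Z - Y)ᴴ * (Z - Y) * B).trace = ((Z - Y) * B * (Z - Y)ᴴ).trace :=
      (trace_mul_cycle _ _ _).symm
    rw [e]
    exact trace_re_nonneg (hB.mul_mul_conjTranspose_same (Z - Y))
  have expand1 : ((Z - Y)ᴴ * A * (Z - Y)).trace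
      = (Zᴴ*A*Z).trace - (Zᴴ*A*Y).trace - (Yᴴ*A*Z).trace + (Yᴴ*A*Y).trace := by
    simp only [conjTranspose_sub, sub_mul, mul_sub, trace_sub]; ring
  have expand2 : ((Z - Y)ᴴ * (Z - Y) * B).trace
      = (Zᴴ*Z*B).trace - (Zᴴ*Y*B).trace - (Yᴴ*Z*B).trace + (Yᴴ*Y*B).trace := by
    simp only [conjTranspose_sub, sub_mul, mul_sub, trace_sub]; ring
  rw [expand1] at h1
  rw [expand2] at h2
  simp only [Complex.add_re, Complex.sub_re] at h1 h2
  have E1 := sylvester_re hY Z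
  have E2 := sylvester_re hY Y
  have E3 : ((Yᴴ*A*Z).trace).re = ((Zᴴ*A*Y).trace).re := re_trace_conj_left hA.1
  have E4 : ((Yᴴ*Z*B).trace).re = ((Zᴴ*Y*B).trace).re := re_trace_conj_right hB.1
  have E4' : s * ((Yᴴ*Z*B).trace).re = s * ((Zᴴ*Y*B).trace).re := by rw [E4]
  have E5 : ((Yᴴ*A).trace).re = ((A*Y).trace).re := re_trace_swap hA.1
  have h2' : 0 ≤ s * (((Zᴴ*Z*B).trace).re - ((Zᴴ*Y*B).trace).re
      - ((Yᴴ*Z*B).trace).re + ((Yᴴ*Y*B).trace).re) := mul_nonneg hs h2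
  nlinarith [h1, h2', E1, E2, E3, E4', E5]

lemma q_eq {A B Y : Matrix (Fin m) (Fin m) ℂ} (hA : A.IsHermitian)
    {s : ℝ} (hY : A * Y + s • (Y * B) = A) :
    2 * ((Yᴴ * A).trace).re - ((Yᴴ * A * Y).trace).re - s * ((Yᴴ * Y * B).trace).re
      = ((A * Y).trace).re := by
  have E2 := sylvester_re hY Y
  have E5 : ((Yᴴ*A).trace).re = ((A*Y).trace).re := re_trace_swap hA
  linarith







section spectral

variable {A B : Matrix (Fin m) (Fin m) ℂ} (hA : A.IsHermitian) (hB : B.IsHermitian)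

lemma star_self_unitary : star (hA.eigenvectorUnitary : Matrix (Fin m) (Fin m) ℂ) *
    (hA.eigenvectorUnitary : Matrix (Fin m) (Fin m) ℂ) = 1 :=
  mem_unitaryGroup_iff'.mp (SetLike.coe_mem hA.eigenvectorUnitary)

lemma self_star_unitary : (hA.eigenvectorUnitary : Matrix (Fin m) (Fin m) ℂ) *
    star (hA.eigenvectorUnitary : Matrix (Fin m) (Fin m) ℂ) = 1 :=
  mem_unitaryGroup_iff.mp (SetLike.coe_mem hA.eigenvectorUnitary)

lemma CC_star : (star (hA.eigenvectorUnitary : Matrix (Fin m) (Fin m) ℂ) *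
      (hB.eigenvectorUnitary : Matrix (Fin m) (Fin m) ℂ)) *
    star (star (hA.eigenvectorUnitary : Matrix (Fin m) (Fin m) ℂ) *
      (hB.eigenvectorUnitary : Matrix (Fin m) (Fin m) ℂ)) = 1 := by
  simp only [Matrix.star_mul, star_star]
  calc star (hA.eigenvectorUnitary : Matrix (Fin m) (Fin m) ℂ) *
        (hB.eigenvectorUnitary : Matrix (Fin m) (Fin m) ℂ) *
        (star (hB.eigenvectorUnitary : Matrix (Fin m) (Fin m) ℂ) *
        (hA.eigenvectorUnitary : Matrix (Fin m) (Fin m) ℂ))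
      = star (hA.eigenvectorUnitary : Matrix (Fin m) (Fin m) ℂ) *
        (((hB.eigenvectorUnitary : Matrix (Fin m) (Fin m) ℂ) *
        star (hB.eigenvectorUnitary : Matrix (Fin m) (Fin m) ℂ)) *
        (hA.eigenvectorUnitary : Matrix (Fin m) (Fin m) ℂ)) := by
        simp only [mul_assoc]
    _ = 1 := by rw [self_star_unitary hB, one_mul, star_self_unitary hA]

lemma trace_mul_cfc (f : ℝ → ℝ) :
    (A * (cfc f B)).trace =
      ((∑ i, ∑ j, hA.eigenvalues i * f (hB.eigenvalues j) *
        Complex.normSq ((star (hA.eigenvectorUnitary : Matrix (Fin m) (Fin m) ℂ) *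
          (hB.eigenvectorUnitary : Matrix (Fin m) (Fin m) ℂ)) i j) : ℝ) : ℂ) := by
  set U := (hA.eigenvectorUnitary : Matrix (Fin m) (Fin m) ℂ) with hU
  set V := (hB.eigenvectorUnitary : Matrix (Fin m) (Fin m) ℂ) with hV
  set C := star U * V with hC
  set x : Fin m → ℂ := Complex.ofReal ∘ hA.eigenvalues with hx
  set y : Fin m → ℂ := Complex.ofReal ∘ f ∘ hB.eigenvalues with hy
  rw [hB.cfc_eq f]
  unfold Matrix.IsHermitian.cfc
  conv_lhs => rw [hA.spectral_theorem]
  simp only [show (RCLike.ofReal : ℝ → ℂ) = Complex.ofReal from rfl]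
  rw [show diagonal (Complex.ofReal ∘ hA.eigenvalues) = diagonal x from rfl,
    show diagonal (Complex.ofReal ∘ f ∘ hB.eigenvalues) = diagonal y from rfl]
  simp only [Unitary.conjStarAlgAut_apply]
  have e1 : (U * diagonal x * star U) * (V * diagonal y * star V)
      = U * (diagonal x * star U * V * diagonal y * star V) := by
    simp only [mul_assoc]
  rw [e1, trace_mul_comm]
  have e2 : (diagonal x * star U * V * diagonal y * star V) * U
      = diagonal x * (C * diagonal y) * star C := by
    rw [hC]; simp only [Matrix.star_mul, star_star]; simp only [mul_assoc]
  rw [e2, trace_diag_mul_mul_star, Complex.ofReal_sum]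
  refine Finset.sum_congr rfl fun i _ => ?_
  rw [Complex.ofReal_sum]
  refine Finset.sum_congr rfl fun j _ => ?_
  rw [Matrix.mul_diagonal]
  rw [Complex.ofReal_mul, Complex.ofReal_mul, ← Complex.mul_conj, ← Complex.star_def]
  simp only [hx, hy, Function.comp_apply]
  ring

lemma trace_eq_sum_eigen : A.trace = ((∑ i, hA.eigenvalues i : ℝ) : ℂ) := by
  conv_lhs => rw [hA.spectral_theorem]
  simp only [Unitary.conjStarAlgAut_apply]
  rw [trace_mul_cycle, star_self_unitary hA, one_mul, trace_diagonal]
  simp only [show (RCLike.ofReal : ℝ → ℂ) = Complex.ofReal from rfl]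
  rw [Complex.ofReal_sum]
  simp

end spectral





section posdefpair

variable {A B : Matrix (Fin m) (Fin m) ℂ} (hA : A.PosDef) (hB : B.PosDef)

/-- transition probabilities -/
noncomputable def P (hA : A.PosDef) (hB : B.PosDef) (i j : Fin m) : ℝ :=
  Complex.normSq ((star (hA.1.eigenvectorUnitary : Matrix (Fin m) (Fin m) ℂ) *
    (hB.1.eigenvectorUnitary : Matrix (Fin m) (Fin m) ℂ)) i j)

lemma P_nonneg (i j : Fin m) : 0 ≤ P hA hB i j := Complex.normSq_nonneg _

lemma P_row_sum (i : Fin m) : ∑ j, P hA hB i j = 1 :=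
  sum_normSq_row (CC_star hA.1 hB.1) i

lemma entropy_formula :
    ((A * (cfc Real.log A - cfc Real.log B)).trace).re
      = ∑ i, ∑ j, P hA hB i j *
          (hA.1.eigenvalues i * Real.log (hA.1.eigenvalues i)
           - hA.1.eigenvalues i * Real.log (hB.1.eigenvalues j)) := by
  rw [mul_sub, trace_sub, Complex.sub_re, trace_mul_cfc hA.1 hA.1 Real.log,
      trace_mul_cfc hA.1 hB.1 Real.log, Complex.ofReal_re, Complex.ofReal_re]
  have first : ∑ i, ∑ j, hA.1.eigenvalues i * Real.log (hA.1.eigenvalues j) *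
      Complex.normSq ((star (hA.1.eigenvectorUnitary : Matrix (Fin m) (Fin m) ℂ) *
        (hA.1.eigenvectorUnitary : Matrix (Fin m) (Fin m) ℂ)) i j)
      = ∑ i, hA.1.eigenvalues i * Real.log (hA.1.eigenvalues i) := by
    rw [star_self_unitary hA.1]
    refine Finset.sum_congr rfl fun i _ => ?_
    simp [Matrix.one_apply, apply_ite Complex.normSq, Finset.sum_ite_eq']
  rw [first]
  have rhs : ∑ i, ∑ j, P hA hB i j *
      (hA.1.eigenvalues i * Real.log (hA.1.eigenvalues i)
        - hA.1.eigenvalues i * Real.log (hB.1.eigenvalues j))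
      = ∑ i, hA.1.eigenvalues i * Real.log (hA.1.eigenvalues i)
        - ∑ i, ∑ j, hA.1.eigenvalues i * Real.log (hB.1.eigenvalues j) * P hA hB i j := by
    rw [← Finset.sum_sub_distrib]
    refine Finset.sum_congr rfl fun i _ => ?_
    simp only [mul_sub]
    rw [Finset.sum_sub_distrib]
    congr 1
    · rw [← Finset.sum_mul, P_row_sum hA hB i, one_mul]
    · exact Finset.sum_congr rfl fun j _ => by ring
  rw [rhs]
  rfl

lemma exists_Y {s : ℝ} (hs : 0 < s) :
    ∃ Y, A * Y + s • (Y * B) = A ∧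
      ((A * Y).trace).re = ∑ i, ∑ j, P hA hB i j *
        ((hA.1.eigenvalues i)^2 / (hA.1.eigenvalues i + s * hB.1.eigenvalues j)) := by
  set U := (hA.1.eigenvectorUnitary : Matrix (Fin m) (Fin m) ℂ) with hU
  set V := (hB.1.eigenvectorUnitary : Matrix (Fin m) (Fin m) ℂ) with hV
  set C := star U * V with hC
  set α := hA.1.eigenvalues with hα
  set β := hB.1.eigenvalues with hβ
  set x : Fin m → ℂ := Complex.ofReal ∘ α with hx
  set y : Fin m → ℂ := Complex.ofReal ∘ β with hy
  have hden : ∀ i j, α i + s * β j ≠ 0 := fun i j => by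
    have h1 := hA.eigenvalues_pos i
    have h2 := hB.eigenvalues_pos j
    positivity
  set D : Matrix (Fin m) (Fin m) ℂ :=
    Matrix.of (fun i j => ((α i / (α i + s * β j) : ℝ) : ℂ) * C i j) with hD
  have cancelU : ∀ X : Matrix (Fin m) (Fin m) ℂ, star U * (U * X) = X := fun X => by
    rw [← mul_assoc, star_self_unitary hA.1, one_mul]
  have cancelV : ∀ X : Matrix (Fin m) (Fin m) ℂ, star V * (V * X) = X := fun X => by
    rw [← mul_assoc, star_self_unitary hB.1, one_mul]
  have hstarU : C * star V = star U := by
    rw [hC, mul_assoc, self_star_unitary hB.1, mul_one]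
  have spectA : A = U * diagonal x * star U := by
    conv_lhs => rw [hA.1.spectral_theorem]
    rfl
  have spectB : B = V * diagonal y * star V := by
    conv_lhs => rw [hB.1.spectral_theorem]
    rfl
  have e1 : A * (U * D * star V) = U * (diagonal x * (D * star V)) := by
    conv_lhs => rw [spectA]
    simp only [mul_assoc]
    rw [cancelU]
  have e2 : (U * D * star V) * B = U * (D * (diagonal y * star V)) := by
    conv_lhs => rw [spectB]
    simp only [mul_assoc]
    rw [cancelV]
  have e3 : A = U * (diagonal x * (C * star V)) := by
    conv_lhs => rw [spectA]
    rw [hstarU]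
    simp only [mul_assoc]
  have key : diagonal x * D + s • (D * diagonal y) = diagonal x * C := by
    ext i j
    simp only [Matrix.add_apply, Matrix.smul_apply, Matrix.diagonal_mul, Matrix.mul_diagonal,
      hD, Matrix.of_apply, hx, hy, Function.comp_apply, Complex.real_smul]
    have hratio : ((α i + s * β j : ℝ) : ℂ) * ((α i / (α i + s * β j) : ℝ) : ℂ)
        = ((α i : ℝ) : ℂ) := by
      rw [← Complex.ofReal_mul]
      congr 1
      rw [mul_comm]
      exact div_mul_cancel₀ _ (hden i j)
    push_cast at hratio ⊢
    linear_combination C i j * hratio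
  refine ⟨U * D * star V, ?_, ?_⟩
  · rw [e1, e2, ← mul_smul_comm, ← mul_add]
    conv_rhs => rw [e3]
    congr 1
    calc diagonal x * (D * star V) + s • (D * (diagonal y * star V))
        = (diagonal x * D) * star V + (s • (D * diagonal y)) * star V := by
          rw [smul_mul_assoc]; simp only [mul_assoc]
      _ = (diagonal x * D + s • (D * diagonal y)) * star V := by rw [add_mul]
      _ = (diagonal x * C) * star V := by rw [key]
      _ = diagonal x * (C * star V) := by rw [mul_assoc]
  · have tr1 : (A * (U * D * star V)).trace = (diagonal x * D * star C).trace := by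
      rw [e1, trace_mul_comm]
      rw [show star C = star V * U by rw [hC]; simp only [Matrix.star_mul, star_star]]
      simp only [mul_assoc]
    rw [tr1, trace_diag_mul_mul_star]
    have term : ∀ i j, x i * D i j * star (C i j)
        = ((α i * (α i / (α i + s * β j)) * Complex.normSq (C i j) : ℝ) : ℂ) := fun i j => by
      simp only [hD, Matrix.of_apply, hx, Function.comp_apply]
      rw [Complex.ofReal_mul, Complex.ofReal_mul, ← Complex.mul_conj, ← Complex.star_def]
      ring
    rw [Finset.sum_congr rfl fun i _ => Finset.sum_congr rfl fun j _ => term i j]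
    rw [Finset.sum_congr rfl fun i _ => (Complex.ofReal_sum _ _).symm, ← Complex.ofReal_sum,
      Complex.ofReal_re]
    refine Finset.sum_congr rfl fun i _ => Finset.sum_congr rfl fun j _ => ?_
    unfold P
    ring

end posdefpair



noncomputable def qq (Z A B : Matrix (Fin m) (Fin m) ℂ) (s : ℝ) : ℝ :=
  2 * ((Zᴴ * A).trace).re - ((Zᴴ * A * Z).trace).re - s * ((Zᴴ * Z * B).trace).re

lemma qq_le {A B Y : Matrix (Fin m) (Fin m) ℂ} (hA : A.PosSemidef) (hB : B.PosSemidef)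
    {s : ℝ} (hs : 0 ≤ s) (hY : A * Y + s • (Y * B) = A) (Z : Matrix (Fin m) (Fin m) ℂ) :
    qq Z A B s ≤ ((A * Y).trace).re := q_le hA hB hs hY Z

lemma qq_eq {A B Y : Matrix (Fin m) (Fin m) ℂ} (hA : A.IsHermitian)
    {s : ℝ} (hY : A * Y + s • (Y * B) = A) : qq Y A B s = ((A * Y).trace).re :=
  q_eq hA hY

lemma qq_lin (Z M₁ M₂ N₁ N₂ : Matrix (Fin m) (Fin m) ℂ) (c d s : ℝ) :
    qq Z (c • M₁ + d • M₂) (c • N₁ + d • N₂) s = c * qq Z M₁ N₁ s + d * qq Z M₂ N₂ s := by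
  unfold qq
  simp only [mul_add, add_mul, Matrix.mul_smul, smul_mul_assoc, trace_add, trace_smul,
    Complex.add_re, Complex.real_smul, Complex.re_ofReal_mul]
  ring

noncomputable def Phi {A B : Matrix (Fin m) (Fin m) ℂ} (hA : A.PosDef) (hB : B.PosDef)
    (s : ℝ) : ℝ :=
  ∑ i, ∑ j, P hA hB i j * h (hA.1.eigenvalues i) (hB.1.eigenvalues j) s

section posdefpair2

variable {A B : Matrix (Fin m) (Fin m) ℂ} (hA : A.PosDef) (hB : B.PosDef)

lemma Phi_integrableOn : MeasureTheory.IntegrableOn (Phi hA hB) (Set.Ioi 0) := by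
  refine MeasureTheory.integrable_finset_sum _ fun i _ =>
    MeasureTheory.integrable_finset_sum _ fun j _ => ?_
  exact (h_integrableOn (hA.eigenvalues_pos i) (hB.eigenvalues_pos j)).const_mul _

lemma entropy_eq_integral :
    ((A * (cfc Real.log A - cfc Real.log B)).trace).re = ∫ s in Set.Ioi 0, Phi hA hB s := by
  rw [entropy_formula hA hB]
  unfold Phi
  rw [MeasureTheory.integral_finset_sum _ (fun i _ =>
    MeasureTheory.integrable_finset_sum _ fun j _ =>
      (h_integrableOn (hA.eigenvalues_pos i) (hB.eigenvalues_pos j)).const_mul _)]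
  refine Finset.sum_congr rfl fun i _ => ?_
  rw [MeasureTheory.integral_finset_sum _ (fun j _ =>
      (h_integrableOn (hA.eigenvalues_pos i) (hB.eigenvalues_pos j)).const_mul _)]
  refine Finset.sum_congr rfl fun j _ => ?_
  rw [MeasureTheory.integral_const_mul,
    h_integral (hA.eigenvalues_pos i) (hB.eigenvalues_pos j)]

lemma Phi_val {s : ℝ} (hs : 0 < s) :
    Phi hA hB s = (A.trace).re * (1/(1+s) - 1/s)
      + (∑ i, ∑ j, P hA hB i j *
          ((hA.1.eigenvalues i)^2 / (hA.1.eigenvalues i + s * hB.1.eigenvalues j)))/s := by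
  have htr : (A.trace).re = ∑ i, hA.1.eigenvalues i := by
    rw [trace_eq_sum_eigen hA.1, Complex.ofReal_re]
  rw [htr]
  unfold Phi
  have split : ∑ i, ∑ j, P hA hB i j * h (hA.1.eigenvalues i) (hB.1.eigenvalues j) s
      = (∑ i, ∑ j, P hA hB i j * (hA.1.eigenvalues i * (1/(1+s) - 1/s)))
        + ∑ i, ∑ j, P hA hB i j *
            (((hA.1.eigenvalues i)^2 / (hA.1.eigenvalues i + s * hB.1.eigenvalues j))/s) := by
    rw [← Finset.sum_add_distrib]
    refine Finset.sum_congr rfl fun i _ => ?_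
    rw [← Finset.sum_add_distrib]
    refine Finset.sum_congr rfl fun j _ => ?_
    rw [h_eq (hA.eigenvalues_pos i) (hB.eigenvalues_pos j) hs]
    ring
  rw [split]
  congr 1
  · rw [Finset.sum_mul]
    refine Finset.sum_congr rfl fun i _ => ?_
    rw [show ∑ j, P hA hB i j * (hA.1.eigenvalues i * (1/(1+s) - 1/s))
        = (∑ j, P hA hB i j) * (hA.1.eigenvalues i * (1/(1+s) - 1/s)) from
          (Finset.sum_mul _ _ _).symm, P_row_sum hA hB i, one_mul]
  · rw [Finset.sum_div]
    refine Finset.sum_congr rfl fun i _ => ?_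
    rw [Finset.sum_div]
    exact Finset.sum_congr rfl fun j _ => by rw [mul_div_assoc]

end posdefpair2

lemma posDef_smul {A : Matrix (Fin m) (Fin m) ℂ} (hA : A.PosDef) {c : ℝ} (hc : 0 < c) :
    (c • A).PosDef := by
  refine Matrix.PosDef.of_dotProduct_mulVec_pos ?_ ?_
  · show (c • A)ᴴ = c • A
    rw [Matrix.conjTranspose_smul, star_trivial, hA.1.eq]
  · intro x hx
    have h0 := hA.dotProduct_mulVec_pos hx
    rw [Matrix.smul_mulVec, dotProduct_smul, Complex.real_smul]
    exact mul_pos (by exact_mod_cast hc) h0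



lemma per_s_ineq {m : ℕ} {A₁ A₂ B₁ B₂ : Matrix (Fin m) (Fin m) ℂ}
    (hA₁ : A₁.PosDef) (hA₂ : A₂.PosDef) (hB₁ : B₁.PosDef) (hB₂ : B₂.PosDef)
    {t : ℝ} (h0 : 0 < t) (h1 : t < 1)
    (hA : (t • A₁ + (1 - t) • A₂).PosDef) (hB : (t • B₁ + (1 - t) • B₂).PosDef) :
    ∀ s ∈ Set.Ioi (0:ℝ),
      Phi hA hB s ≤ t * Phi hA₁ hB₁ s + (1 - t) * Phi hA₂ hB₂ s := by
  intro s hs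
  have hs' : (0:ℝ) < s := hs
  obtain ⟨Y, hY, hG⟩ := exists_Y hA hB hs'
  obtain ⟨Y₁, hY₁, hG₁⟩ := exists_Y hA₁ hB₁ hs'
  obtain ⟨Y₂, hY₂, hG₂⟩ := exists_Y hA₂ hB₂ hs'
  have hGle : (((t • A₁ + (1 - t) • A₂) * Y).trace).re
      ≤ t * ((A₁ * Y₁).trace).re + (1 - t) * ((A₂ * Y₂).trace).re := by
    have e_eq : qq Y (t • A₁ + (1 - t) • A₂) (t • B₁ + (1 - t) • B₂) s
        = (((t • A₁ + (1 - t) • A₂) * Y).trace).re := qq_eq hA.1 hY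
    have e_lin := qq_lin Y A₁ A₂ B₁ B₂ t (1 - t) s
    have le1 := qq_le hA₁.posSemidef hB₁.posSemidef hs'.le hY₁ Y
    have le2 := qq_le hA₂.posSemidef hB₂.posSemidef hs'.le hY₂ Y
    nlinarith [mul_le_mul_of_nonneg_left le1 h0.le,
      mul_le_mul_of_nonneg_left le2 (by linarith : (0:ℝ) ≤ 1 - t)]
  have hT : (((t • A₁ + (1 - t) • A₂)).trace).re
      = t * (A₁.trace).re + (1 - t) * (A₂.trace).re := by
    simp [trace_add, trace_smul, Complex.add_re, Complex.real_smul, Complex.re_ofReal_mul]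
  rw [Phi_val hA hB hs', Phi_val hA₁ hB₁ hs', Phi_val hA₂ hB₂ hs',
    ← hG, ← hG₁, ← hG₂, hT]
  have hdiv : (((t • A₁ + (1 - t) • A₂) * Y).trace).re / s
      ≤ (t * ((A₁ * Y₁).trace).re + (1 - t) * ((A₂ * Y₂).trace).re) / s :=
    div_le_div_of_nonneg_right hGle hs'.le |>.trans_eq rfl
  have hrw : (t * ((A₁ * Y₁).trace).re + (1 - t) * ((A₂ * Y₂).trace).re) / s
      = t * (((A₁ * Y₁).trace).re / s) + (1 - t) * (((A₂ * Y₂).trace).re / s) := by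
    ring
  rw [hrw] at hdiv
  nlinarith [hdiv]


end RelEntAux


open RelEntAux

/-- Joint convexity of the quantum relative entropy
`D(A‖B) = tr (A * (log A - log B))` on pairs of positive definite Hermitian
matrices: for `t ∈ [0, 1]`,
`D(tA₁+(1-t)A₂ ‖ tB₁+(1-t)B₂) ≤ t D(A₁‖B₁) + (1-t) D(A₂‖B₂)`. -/
theorem relativeEntropy_jointly_convex {n : ℕ}
    (A₁ A₂ B₁ B₂ : Matrix (Fin n) (Fin n) ℂ)
    (hA₁ : A₁.PosDef) (hA₂ : A₂.PosDef) (hB₁ : B₁.PosDef) (hB₂ : B₂.PosDef)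
    (t : ℝ) (ht : t ∈ Set.Icc (0:ℝ) 1) :
    (((t • A₁ + (1 - t) • A₂) *
        (cfc Real.log (t • A₁ + (1 - t) • A₂) -
          cfc Real.log (t • B₁ + (1 - t) • B₂))).trace).re ≤
      t * ((A₁ * (cfc Real.log A₁ - cfc Real.log B₁)).trace).re +
      (1 - t) * ((A₂ * (cfc Real.log A₂ - cfc Real.log B₂)).trace).re := by
  obtain ⟨ht0, ht1⟩ := ht
  rcases eq_or_lt_of_le ht0 with h0 | h0
  · rw [← h0]; simp
  rcases eq_or_lt_of_le ht1 with h1 | h1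
  · rw [h1]; simp
  have hA : (t • A₁ + (1 - t) • A₂).PosDef :=
    (posDef_smul hA₁ h0).add (posDef_smul hA₂ (by linarith))
  have hB : (t • B₁ + (1 - t) • B₂).PosDef :=
    (posDef_smul hB₁ h0).add (posDef_smul hB₂ (by linarith))
  rw [entropy_eq_integral hA hB, entropy_eq_integral hA₁ hB₁, entropy_eq_integral hA₂ hB₂]
  have key := per_s_ineq hA₁ hA₂ hB₁ hB₂ h0 h1 hA hB
  calc (∫ s in Set.Ioi 0, Phi hA hB s)
      ≤ ∫ s in Set.Ioi 0, (t * Phi hA₁ hB₁ s + (1 - t) * Phi hA₂ hB₂ s) :=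
        setIntegral_mono_on (Phi_integrableOn hA hB)
          (((Phi_integrableOn hA₁ hB₁).const_mul t).add
            ((Phi_integrableOn hA₂ hB₂).const_mul (1 - t))) measurableSet_Ioi key
    _ = t * (∫ s in Set.Ioi 0, Phi hA₁ hB₁ s) + (1 - t) * ∫ s in Set.Ioi 0, Phi hA₂ hB₂ s := by
        rw [integral_add ((Phi_integrableOn hA₁ hB₁).const_mul t)
          ((Phi_integrableOn hA₂ hB₂).const_mul (1 - t)),
          integral_const_mul, integral_const_mul]
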